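/- Falb–Wolovich decoupling feedback (sufficiency part of Proposition 2.7). Let A ∈ ℝ^{n×n}, B ∈ ℝ^{n×p}, C ∈ ℝ^{p×n} be such that for every i ∈ {1,…,p} the relative order d_i exists, i.e. d_i ≤ n and C_i A^{d_i−1} B ≠ 0. If det B* ≠ 0 and one sets F = −(B*)⁻¹ A* and G = (B*)⁻¹, then over the field ℝ(s) of real rational functions the closed-loop transfer function C (sI − A − BF)⁻¹ B G equals the diagonal matrix diag(s^{−d_1}, …, s^{−d_p}). -/

import Mathlib

noncomputable section
open Matrix

/-- Entrywise embedding of a real matrix into matrices over the field ℝ(s). -/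
noncomputable def toRat {k l : ℕ} (M : Matrix (Fin k) (Fin l) ℝ) :
    Matrix (Fin k) (Fin l) (RatFunc ℝ) :=
  M.map (algebraMap ℝ (RatFunc ℝ))

/-- The matrix `s I - M` over ℝ(s). -/
noncomputable def sIm {k : ℕ} (M : Matrix (Fin k) (Fin k) ℝ) :
    Matrix (Fin k) (Fin k) (RatFunc ℝ) :=
  Matrix.scalar (Fin k) (RatFunc.X : RatFunc ℝ) - toRat M

open Polynomial in
lemma sIm_eq_map {k : ℕ} (M : Matrix (Fin k) (Fin k) ℝ) :
    sIm M = (charmatrix M).map (algebraMap (Polynomial ℝ) (RatFunc ℝ)) := by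
  ext i j
  by_cases h : i = j
  · subst h
    simp [sIm, toRat, charmatrix_apply_eq, map_sub, RatFunc.algebraMap_X,
      RatFunc.algebraMap_C, RatFunc.algebraMap_eq_C, Matrix.scalar]
  · simp [sIm, toRat, charmatrix_apply_ne _ _ _ h, Matrix.scalar, Matrix.diagonal_apply, h,
      RatFunc.algebraMap_C, RatFunc.algebraMap_eq_C]

lemma sIm_det_isUnit {k : ℕ} (M : Matrix (Fin k) (Fin k) ℝ) : IsUnit (sIm M).det := by
  rw [isUnit_iff_ne_zero, sIm_eq_map]
  have h : ((charmatrix M).map (algebraMap (Polynomial ℝ) (RatFunc ℝ))).det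
      = algebraMap (Polynomial ℝ) (RatFunc ℝ) (M.charpoly) := by
    rw [Matrix.charpoly, RingHom.map_det]; rfl
  rw [h]
  intro hzero
  exact (Matrix.charpoly_monic M).ne_zero
    ((map_eq_zero_iff _ (RatFunc.algebraMap_injective ℝ)).mp hzero)

lemma sIm_eq_diag_sub {k : ℕ} (M : Matrix (Fin k) (Fin k) ℝ) :
    sIm M = Matrix.diagonal (fun _ => (RatFunc.X : RatFunc ℝ)) - toRat M := by
  rw [sIm, Matrix.scalar_apply]

/-- Falb–Wolovich decoupling feedback (sufficiency part of Proposition 2.7):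
if every relative order `d i` exists (`d i` is the least `j ∈ {1,…,n}` with
`Cᵢ A^(j-1) B ≠ 0`), `det B* ≠ 0`, `F = -(B*)⁻¹ A*`, `G = (B*)⁻¹`, then the
closed-loop transfer function is `diag (s^{-d 1}, …, s^{-d p})`. -/
theorem falb_wolovich_feedback_decouples
    (n p : ℕ) (A : Matrix (Fin n) (Fin n) ℝ) (B : Matrix (Fin n) (Fin p) ℝ)
    (C : Matrix (Fin p) (Fin n) ℝ) (d : Fin p → ℕ)
    (hd1 : ∀ i, 1 ≤ d i) (hdn : ∀ i, d i ≤ n)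
    (hdne : ∀ i, (fun j => (C * A ^ (d i - 1) * B) i j) ≠ 0)
    (hdmin : ∀ i, ∀ j, 1 ≤ j → j < d i → (fun l => (C * A ^ (j - 1) * B) i l) = 0)
    (Bstar : Matrix (Fin p) (Fin p) ℝ)
    (hBstar : Bstar = Matrix.of fun i j => (C * A ^ (d i - 1) * B) i j)
    (Astar : Matrix (Fin p) (Fin n) ℝ)
    (hAstar : Astar = Matrix.of fun i j => (C * A ^ (d i)) i j)
    (hdet : Bstar.det ≠ 0)
    (F : Matrix (Fin p) (Fin n) ℝ) (hF : F = -(Bstar⁻¹ * Astar))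
    (G : Matrix (Fin p) (Fin p) ℝ) (hG : G = Bstar⁻¹) :
    toRat C * (sIm (A + B * F))⁻¹ * toRat B * toRat G =
      Matrix.diagonal fun i => ((RatFunc.X : RatFunc ℝ) ^ d i)⁻¹ := by
  set R := RatFunc ℝ
  set φ := algebraMap ℝ R with hφ
  set X : R := RatFunc.X with hX
  set Ab := A + B * F with hAb
  have hBunit : IsUnit Bstar.det := isUnit_iff_ne_zero.mpr hdet
  have hBF : Bstar * F = -Astar := by
    rw [hF, Matrix.mul_neg, ← Matrix.mul_assoc, Matrix.mul_nonsing_inv _ hBunit, Matrix.one_mul]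
  -- zero early Markov parameters, entrywise version
  have hCB0 : ∀ i (k : ℕ), k + 1 < d i → ∀ l, (C * A ^ k * B) i l = 0 := by
    intro i k hk l
    have h := hdmin i (k + 1) (Nat.succ_le_succ (Nat.zero_le k)) hk
    have := congrFun h l
    simpa using this
  -- rows of C * Ab^k agree with rows of C * A^k for k < d i
  have rowpow : ∀ i : Fin p, ∀ k : ℕ, k < d i → ∀ j, (C * Ab ^ k) i j = (C * A ^ k) i j := by
    intro i k
    induction k with
    | zero => intro _ j; simp
    | succ k ih =>
      intro hk j
      have hk' : k < d i := Nat.lt_of_succ_lt hk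
      have h1 : (C * Ab ^ (k + 1)) i j = (C * A ^ k * Ab) i j := by
        rw [pow_succ, ← Matrix.mul_assoc, Matrix.mul_apply, Matrix.mul_apply]
        exact Finset.sum_congr rfl fun l _ => by rw [ih hk' l]
      have h2 : C * A ^ k * Ab = C * A ^ (k + 1) + C * A ^ k * B * F := by
        rw [hAb, Matrix.mul_add, pow_succ, ← Matrix.mul_assoc C (A ^ k) A,
          ← Matrix.mul_assoc (C * A ^ k) B F]
      have h3 : (C * A ^ k * B * F) i j = 0 := by
        rw [Matrix.mul_apply]
        exact Finset.sum_eq_zero fun l _ => by rw [hCB0 i k hk l, zero_mul]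
      rw [h1, h2, Matrix.add_apply, h3, add_zero]
  -- row i of C * Ab^(d i) vanishes
  have rowzero : ∀ i : Fin p, ∀ j, (C * Ab ^ (d i)) i j = 0 := by
    intro i j
    have hd : d i = (d i - 1) + 1 := (Nat.succ_pred_eq_of_pos (hd1 i)).symm
    have hsplit : Ab ^ (d i) = Ab ^ (d i - 1) * Ab := by rw [← pow_succ, ← hd]
    have h1 : (C * Ab ^ (d i)) i j = (C * A ^ (d i - 1) * Ab) i j := by
      rw [hsplit, ← Matrix.mul_assoc, Matrix.mul_apply, Matrix.mul_apply]
      exact Finset.sum_congr rfl fun l _ => by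
        rw [rowpow i (d i - 1) (by have := hd1 i; omega) l]
    have h2 : C * A ^ (d i - 1) * Ab = C * A ^ (d i - 1) * A + C * A ^ (d i - 1) * B * F := by
      rw [hAb, Matrix.mul_add, ← Matrix.mul_assoc (C * A ^ (d i - 1)) B F]
    have hCA : (C * A ^ (d i - 1) * A) i j = (C * A ^ (d i)) i j := by
      rw [Matrix.mul_assoc, ← pow_succ, ← hd]
    have hBFrow : (C * A ^ (d i - 1) * B * F) i j = (Bstar * F) i j := by
      rw [Matrix.mul_apply, Matrix.mul_apply]
      exact Finset.sum_congr rfl fun l _ => by rw [hBstar]; rfl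
    rw [h1, h2, Matrix.add_apply, hCA, hBFrow, hBF, Matrix.neg_apply, hAstar]
    simp
  -- the auxiliary matrix V
  set V : Matrix (Fin p) (Fin n) R :=
    Matrix.of (fun i j => ∑ k ∈ Finset.range (d i), X ^ (d i - 1 - k) * φ ((C * Ab ^ k) i j))
    with hV
  set D : Matrix (Fin p) (Fin p) R := Matrix.diagonal (fun i => X ^ d i) with hD
  -- Claim 1 : V * sIm Ab = D * toRat C
  have claim1 : V * sIm Ab = D * toRat C := by
    ext i j
    rw [sIm_eq_diag_sub, Matrix.mul_sub, Matrix.sub_apply, Matrix.mul_diagonal]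
    have hXV : V i j * X = ∑ k ∈ Finset.range (d i), X ^ (d i - k) * φ ((C * Ab ^ k) i j) := by
      rw [hV, Matrix.of_apply, Finset.sum_mul]
      refine Finset.sum_congr rfl fun k hk => ?_
      rw [mul_comm _ X, ← mul_assoc, ← pow_succ']
      congr 2
      have := Finset.mem_range.mp hk
      omega
    have hVA : (V * toRat Ab) i j
        = ∑ k ∈ Finset.range (d i), X ^ (d i - (k + 1)) * φ ((C * Ab ^ (k + 1)) i j) := by
      rw [Matrix.mul_apply]
      simp only [hV, Matrix.of_apply, toRat, Matrix.map_apply]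
      simp only [Finset.sum_mul (R := R)]
      rw [Finset.sum_comm]
      refine Finset.sum_congr rfl fun k _ => ?_
      have hmul : (C * Ab ^ (k + 1)) i j = ∑ l, (C * Ab ^ k) i l * Ab l j := by
        rw [pow_succ, ← Matrix.mul_assoc, Matrix.mul_apply]
      rw [hmul, map_sum φ, Finset.mul_sum]
      refine Finset.sum_congr rfl fun l _ => ?_
      rw [_root_.map_mul, mul_assoc]
      congr 2
      omega
    rw [hXV, hVA, ← Finset.sum_sub_distrib]
    have htel := Finset.sum_range_sub' (fun k => X ^ (d i - k) * φ ((C * Ab ^ k) i j)) (d i)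
    rw [htel, rowzero i j, map_zero, mul_zero, sub_zero, Nat.sub_zero, pow_zero,
      Matrix.mul_one, hD, Matrix.diagonal_mul]
    simp only [toRat, Matrix.map_apply, hφ]
    rfl
  -- Claim 2 : V * toRat B = toRat Bstar
  have claim2 : V * toRat B = toRat Bstar := by
    ext i j
    rw [Matrix.mul_apply]
    have hswap : ∑ l, V i l * toRat B l j
        = ∑ k ∈ Finset.range (d i), X ^ (d i - 1 - k) * φ ((C * Ab ^ k * B) i j) := by
      simp only [hV, Matrix.of_apply, toRat, Matrix.map_apply]
      simp only [Finset.sum_mul (R := R)]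
      rw [Finset.sum_comm]
      refine Finset.sum_congr rfl fun k _ => ?_
      rw [Matrix.mul_apply (M := C * Ab ^ k) (N := B), map_sum φ, Finset.mul_sum]
      exact Finset.sum_congr rfl fun l _ => by rw [_root_.map_mul, mul_assoc]
    rw [hswap]
    rw [Finset.sum_eq_single_of_mem (d i - 1) (Finset.mem_range.mpr (by have := hd1 i; omega))]
    · rw [Nat.sub_self, pow_zero, one_mul]
      have hrow : (C * Ab ^ (d i - 1) * B) i j = (C * A ^ (d i - 1) * B) i j := by
        rw [Matrix.mul_apply, Matrix.mul_apply]
        exact Finset.sum_congr rfl fun l _ => by rw [rowpow i (d i - 1) (by have := hd1 i; omega) l]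
      rw [hrow, hBstar]
      rfl
    · intro k hk hkne
      have hk' : k < d i := Finset.mem_range.mp hk
      have hklt : k + 1 < d i := by omega
      have hz : (C * Ab ^ k * B) i j = 0 := by
        have hrow : (C * Ab ^ k * B) i j = (C * A ^ k * B) i j := by
          rw [Matrix.mul_apply, Matrix.mul_apply]
          exact Finset.sum_congr rfl fun l _ => by rw [rowpow i k hk' l]
        rw [hrow, hCB0 i k hklt j]
      rw [hz, map_zero, mul_zero]
  -- assemble everything
  have hS := sIm_det_isUnit Ab
  have hVS : V * sIm Ab * (sIm Ab)⁻¹ = V := by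
    rw [Matrix.mul_assoc, Matrix.mul_nonsing_inv _ hS, Matrix.mul_one]
  have hDunit : IsUnit D.det := by
    rw [hD, Matrix.det_diagonal]
    exact isUnit_iff_ne_zero.mpr (Finset.prod_ne_zero_iff.mpr fun i _ =>
      pow_ne_zero _ RatFunc.X_ne_zero)
  have key : D * (toRat C * (sIm Ab)⁻¹ * toRat B * toRat G) = 1 := by
    calc D * (toRat C * (sIm Ab)⁻¹ * toRat B * toRat G)
        = (D * toRat C) * (sIm Ab)⁻¹ * toRat B * toRat G := by
          rw [← Matrix.mul_assoc, ← Matrix.mul_assoc, ← Matrix.mul_assoc]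
      _ = V * sIm Ab * (sIm Ab)⁻¹ * toRat B * toRat G := by rw [claim1]
      _ = V * toRat B * toRat G := by rw [hVS]
      _ = toRat Bstar * toRat G := by rw [claim2]
      _ = toRat (Bstar * G) := by rw [toRat, toRat, toRat, ← Matrix.map_mul]
      _ = 1 := by rw [hG, Matrix.mul_nonsing_inv _ hBunit, toRat]; simp
  have hDR : D * Matrix.diagonal (fun i => (X ^ d i)⁻¹) = 1 := by
    rw [hD, Matrix.diagonal_mul_diagonal]
    have : (fun i => X ^ d i * (X ^ d i)⁻¹) = fun _ : Fin p => (1 : R) :=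
      funext fun i => mul_inv_cancel₀ (pow_ne_zero _ RatFunc.X_ne_zero)
    rw [this, Matrix.diagonal_one]
  have hcancel : ∀ E : Matrix (Fin p) (Fin p) R, D * E = 1 → E = D⁻¹ := by
    intro E hE
    calc E = (D⁻¹ * D) * E := by rw [Matrix.nonsing_inv_mul _ hDunit, Matrix.one_mul]
      _ = D⁻¹ * (D * E) := by rw [Matrix.mul_assoc]
      _ = D⁻¹ := by rw [hE, Matrix.mul_one]
  rw [hcancel _ key]
  exact (hcancel _ hDR).symm
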